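/- Let L be an infinite flat bounded lattice, let n ∈ ℕ, and let f : Lⁿ → L be monotone (with respect to the componentwise order on Lⁿ). Suppose there is a finite set C ⊆ L such that for every bijection π : L → L fixing every element of C ∪ {⊥, ⊤}, one has f(π(x₁), …, π(xₙ)) = π(f(x₁, …, xₙ)) for all x₁, …, xₙ ∈ L. Then f is an n-ary polynomial function on L. -/
import Mathlib


universe u

/-- An `n`-ary polynomial function on a lattice: member of the smallest set of functions
`Lⁿ → L` containing all coordinate projections and all constant functions and closed
under pointwise meet and join. -/
inductive IsLatticePolynomial {L : Type u} [Lattice L] {n : ℕ} : ((Fin n → L) → L) → Prop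
  | proj (i : Fin n) : IsLatticePolynomial (fun x => x i)
  | const (c : L) : IsLatticePolynomial (fun _ => c)
  | inf {p q : (Fin n → L) → L} : IsLatticePolynomial p → IsLatticePolynomial q →
      IsLatticePolynomial (fun x => p x ⊓ q x)
  | sup {p q : (Fin n → L) → L} : IsLatticePolynomial p → IsLatticePolynomial q →
      IsLatticePolynomial (fun x => p x ⊔ q x)

set_option linter.unusedSectionVars false
set_option linter.unusedVariables false

namespace Stmt8Aux


theorem flat_inf_eq_bot {L : Type u} [Lattice L] [BoundedOrder L]
    (hflat : ∀ a b : L, a ≤ b → a = ⊥ ∨ b = ⊤ ∨ a = b)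
    {a b : L} (ha : a ≠ ⊤) (hb : b ≠ ⊤) (hab : a ≠ b) : a ⊓ b = ⊥ := by
  rcases hflat (a ⊓ b) a inf_le_left with h | h | h
  · exact h
  · exact absurd h ha
  · have hle : a ≤ b := h ▸ inf_le_right
    rcases hflat a b hle with h2 | h2 | h2
    · simp [h2]
    · exact absurd h2 hb
    · exact absurd h2 hab

theorem flat_sup_eq_top {L : Type u} [Lattice L] [BoundedOrder L]
    (hflat : ∀ a b : L, a ≤ b → a = ⊥ ∨ b = ⊤ ∨ a = b)
    {a b : L} (ha : a ≠ ⊥) (hb : b ≠ ⊥) (hab : a ≠ b) : a ⊔ b = ⊤ := by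
  rcases hflat a (a ⊔ b) le_sup_left with h | h | h
  · exact absurd h ha
  · exact h
  · have hle : b ≤ a := by
      have : b ≤ a ⊔ b := le_sup_right
      rwa [← h] at this
    rcases hflat b a hle with h2 | h2 | h2
    · exact absurd h2 hb
    · simp [h2]
    · exact absurd h2.symm hab

theorem flat_eq_top_of_two {L : Type u} [Lattice L] [BoundedOrder L]
    (hflat : ∀ a b : L, a ≤ b → a = ⊥ ∨ b = ⊤ ∨ a = b)
    {v s s' : L} (hsb : s ≠ ⊥) (hs'b : s' ≠ ⊥) (hne : s ≠ s')
    (h1 : s ≤ v) (h2 : s' ≤ v) : v = ⊤ := by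
  by_contra hv
  rcases hflat s v h1 with h | h | h
  · exact hsb h
  · exact hv h
  rcases hflat s' v h2 with h' | h' | h'
  · exact hs'b h'
  · exact hv h'
  · exact hne (h.trans h'.symm)

theorem exists_fresh {α : Type u} [Infinite α] (S : Set α) (hS : S.Finite) (k : ℕ) :
    ∃ a : Fin k → α, Function.Injective a ∧ ∀ j, a j ∉ S := by
  induction k with
  | zero => exact ⟨fun j => j.elim0, fun j => j.elim0, fun j => j.elim0⟩
  | succ k ih =>
    obtain ⟨a, ha, haS⟩ := ih
    have hfin : (S ∪ Set.range a).Finite := hS.union (Set.finite_range a)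
    obtain ⟨b, hb⟩ := hfin.infinite_compl.nonempty
    rw [Set.mem_compl_iff, Set.mem_union] at hb
    push_neg at hb
    refine ⟨Fin.cons b a, ?_, ?_⟩
    · rw [Fin.cons_injective_iff]
      exact ⟨hb.2, ha⟩
    · intro j
      refine Fin.cases ?_ ?_ j
      · simpa using hb.1
      · intro j'; simpa using haS j'

open Classical in
noncomputable def msFun {α : Type u} {k : ℕ} (a b : Fin k → α) (x : α) : α :=
  if h : ∃ j, a j = x then b h.choose else if h : ∃ j, b j = x then a h.choose else x

theorem msFun_a {α : Type u} {k : ℕ} {a b : Fin k → α} (ha : Function.Injective a)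
    (j : Fin k) : msFun a b (a j) = b j := by
  have h : ∃ j', a j' = a j := ⟨j, rfl⟩
  rw [msFun, dif_pos h]
  exact congrArg b (ha h.choose_spec)

theorem msFun_b {α : Type u} {k : ℕ} {a b : Fin k → α} (hb : Function.Injective b)
    (hd : ∀ j j', a j ≠ b j') (j : Fin k) : msFun a b (b j) = a j := by
  have h1 : ¬ ∃ j', a j' = b j := fun ⟨j', e⟩ => hd j' j e
  have h2 : ∃ j', b j' = b j := ⟨j, rfl⟩
  rw [msFun, dif_neg h1, dif_pos h2]
  exact congrArg a (hb h2.choose_spec)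

theorem msFun_other {α : Type u} {k : ℕ} {a b : Fin k → α} {x : α}
    (hxa : ∀ j, a j ≠ x) (hxb : ∀ j, b j ≠ x) : msFun a b x = x := by
  rw [msFun, dif_neg (fun ⟨j, e⟩ => hxa j e), dif_neg (fun ⟨j, e⟩ => hxb j e)]

theorem msFun_invol {α : Type u} {k : ℕ} {a b : Fin k → α}
    (ha : Function.Injective a) (hb : Function.Injective b)
    (hd : ∀ j j', a j ≠ b j') : Function.Involutive (msFun a b) := by
  intro x
  by_cases h : ∃ j, a j = x
  · obtain ⟨j, rfl⟩ := h
    rw [msFun_a ha, msFun_b hb hd]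
  · by_cases h2 : ∃ j, b j = x
    · obtain ⟨j, rfl⟩ := h2
      rw [msFun_b hb hd, msFun_a ha]
    · push_neg at h h2
      rw [msFun_other h h2, msFun_other h h2]

theorem exists_perm {α : Type u} [Infinite α] (P : Set α) (hP : P.Finite) {k : ℕ}
    (a b : Fin k → α) (ha : Function.Injective a) (hb : Function.Injective b)
    (haP : ∀ j, a j ∉ P) (hbP : ∀ j, b j ∉ P) :
    ∃ π : α ≃ α, (∀ d ∈ P, π d = d) ∧ (∀ j, π (a j) = b j) := by
  obtain ⟨t, ht, htS⟩ := exists_fresh (P ∪ Set.range a ∪ Set.range b)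
    ((hP.union (Set.finite_range a)).union (Set.finite_range b)) k
  have htP : ∀ j, t j ∉ P := fun j h => htS j (Or.inl (Or.inl h))
  have hd1 : ∀ j j', a j ≠ t j' := fun j j' e => htS j' (Or.inl (Or.inr ⟨j, e⟩))
  have hd2 : ∀ j j', t j ≠ b j' := by
    intro j j' e
    exact htS j (Or.inr ⟨j', e.symm⟩)
  let σ1 := (msFun_invol ha ht hd1).toPerm
  let σ2 := (msFun_invol ht hb hd2).toPerm
  refine ⟨σ1.trans σ2, ?_, ?_⟩
  · intro d hd
    have e1 : σ1 d = d := by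
      show msFun a t d = d
      exact msFun_other (fun j e => haP j (e ▸ hd)) (fun j e => htP j (e ▸ hd))
    have e2 : σ2 d = d := by
      show msFun t b d = d
      exact msFun_other (fun j e => htP j (e ▸ hd)) (fun j e => hbP j (e ▸ hd))
    simp [Equiv.trans_apply, e1, e2]
  · intro j
    have e1 : σ1 (a j) = t j := msFun_a ha j
    have e2 : σ2 (t j) = b j := msFun_a ht j
    simp [Equiv.trans_apply, e1, e2]

theorem perm_not_mem {α : Type u} {P : Set α} {π : α ≃ α}
    (hfix : ∀ d ∈ P, π d = d) {x : α} (hx : x ∉ P) : π x ∉ P := by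
  intro h
  have h2 : π (π x) = π x := hfix _ h
  exact hx (π.injective h2 ▸ h)


section Gadgets

variable {L : Type u} [Lattice L] [BoundedOrder L]

def tauF (m : Fin 4 → L) (y : L) : L := ((y ⊓ m 0) ⊔ (y ⊓ m 1)) ⊓ ((y ⊓ m 2) ⊔ (y ⊓ m 3))

def betaF (m : Fin 4 → L) (y : L) : L := ((y ⊔ m 0) ⊓ (y ⊔ m 1)) ⊔ ((y ⊔ m 2) ⊓ (y ⊔ m 3))

def chiF (m : Fin 4 → L) (c y : L) : L := ((y ⊓ c) ⊔ m 0) ⊓ ((y ⊓ c) ⊔ m 1)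

def muF (m : Fin 4 → L) (c y : L) : L := betaF m ((((y ⊔ c) ⊓ m 0) ⊔ m 1) ⊓ y)

def kappaF (m : Fin 4 → L) (Cm : Finset L) (y : L) : L :=
  betaF m y ⊓ Cm.inf fun c => muF m c y

variable (hbt : (⊥ : L) ≠ ⊤)
  (hflat : ∀ a b : L, a ≤ b → a = ⊥ ∨ b = ⊤ ∨ a = b)
  {m : Fin 4 → L} (hm : ∀ j, m j ≠ ⊥ ∧ m j ≠ ⊤) (hmI : Function.Injective m)

include hbt hflat hm hmI

theorem tauF_top : tauF m (⊤ : L) = ⊤ := by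
  rw [tauF, top_inf_eq, top_inf_eq, top_inf_eq, top_inf_eq,
    flat_sup_eq_top hflat (hm 0).1 (hm 1).1 (fun e => by exact absurd (hmI e) (by decide)),
    flat_sup_eq_top hflat (hm 2).1 (hm 3).1 (fun e => by exact absurd (hmI e) (by decide)),
    top_inf_eq]

theorem tauF_ne {y : L} (hy : y ≠ ⊤) : tauF m y = ⊥ := by
  have key : ∀ j : Fin 4, y ≠ m j → y ⊓ m j = ⊥ := by
    intro j hne
    by_cases hyb : y = ⊥
    · simp [hyb]
    · exact flat_inf_eq_bot hflat hy (hm j).2 hne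
  have hdist : ∀ j j' : Fin 4, j ≠ j' → y = m j → y ≠ m j' := by
    intro j j' hjj hj hj'
    exact hjj (hmI (hj ▸ hj' ▸ rfl))
  by_cases h0 : y = m 0
  · have h2 := key 2 (hdist 0 2 (by decide) h0)
    have h3 := key 3 (hdist 0 3 (by decide) h0)
    rw [tauF, h2, h3]
    simp
  · by_cases h1 : y = m 1
    · have h2 := key 2 (hdist 1 2 (by decide) h1)
      have h3 := key 3 (hdist 1 3 (by decide) h1)
      rw [tauF, h2, h3]
      simp
    · rw [tauF, key 0 h0, key 1 h1]
      simp

theorem betaF_bot : betaF m (⊥ : L) = ⊥ := by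
  rw [betaF, bot_sup_eq, bot_sup_eq, bot_sup_eq, bot_sup_eq,
    flat_inf_eq_bot hflat (hm 0).2 (hm 1).2 (fun e => by exact absurd (hmI e) (by decide)),
    flat_inf_eq_bot hflat (hm 2).2 (hm 3).2 (fun e => by exact absurd (hmI e) (by decide)),
    bot_sup_eq]

theorem betaF_ne {y : L} (hy : y ≠ ⊥) : betaF m y = ⊤ := by
  have key : ∀ j : Fin 4, y ≠ m j → y ⊔ m j = ⊤ := by
    intro j hne
    by_cases hyt : y = ⊤
    · simp [hyt]
    · exact flat_sup_eq_top hflat hy (hm j).1 hne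
  have hdist : ∀ j j' : Fin 4, j ≠ j' → y = m j → y ≠ m j' := by
    intro j j' hjj hj hj'
    exact hjj (hmI (hj ▸ hj' ▸ rfl))
  by_cases h0 : y = m 0
  · have h2 := key 2 (hdist 0 2 (by decide) h0)
    have h3 := key 3 (hdist 0 3 (by decide) h0)
    rw [betaF, h2, h3]
    simp
  · by_cases h1 : y = m 1
    · have h2 := key 2 (hdist 1 2 (by decide) h1)
      have h3 := key 3 (hdist 1 3 (by decide) h1)
      rw [betaF, h2, h3]
      simp
    · rw [betaF, key 0 h0, key 1 h1]
      simp

theorem chiF_mem {c y : L} (hcb : c ≠ ⊥) (hm0c : m 0 ≠ c) (hm1c : m 1 ≠ c)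
    (hy : y = c ∨ y = ⊤) : chiF m c y = ⊤ := by
  have hyc : y ⊓ c = c := by
    rcases hy with h | h
    · simp [h]
    · simp [h]
  rw [chiF, hyc,
    flat_sup_eq_top hflat hcb (hm 0).1 (Ne.symm hm0c),
    flat_sup_eq_top hflat hcb (hm 1).1 (Ne.symm hm1c),
    top_inf_eq]

theorem chiF_not {c y : L} (hct : c ≠ ⊤) (hy1 : y ≠ c) (hy2 : y ≠ ⊤) : chiF m c y = ⊥ := by
  have hyc : y ⊓ c = ⊥ := by
    by_cases hyb : y = ⊥
    · simp [hyb]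
    · exact flat_inf_eq_bot hflat hy2 hct hy1
  rw [chiF, hyc, bot_sup_eq, bot_sup_eq,
    flat_inf_eq_bot hflat (hm 0).2 (hm 1).2 (fun e => by exact absurd (hmI e) (by decide))]

theorem muF_ne {c y : L} (hy : y ≠ ⊥) (hyc : y ≠ c) (hcb : c ≠ ⊥) : muF m c y = ⊤ := by
  have hsup : y ⊔ c = ⊤ := by
    by_cases hyt : y = ⊤
    · simp [hyt]
    · exact flat_sup_eq_top hflat hy hcb hyc
  have h01 : m 0 ⊔ m 1 = ⊤ :=
    flat_sup_eq_top hflat (hm 0).1 (hm 1).1 (fun e => by exact absurd (hmI e) (by decide))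
  rw [muF, hsup, top_inf_eq, h01, top_inf_eq]
  exact betaF_ne hbt hflat hm hmI hy

theorem muF_self {c : L} (hcb : c ≠ ⊥) (hct : c ≠ ⊤) (hm0c : m 0 ≠ c) (hm1c : m 1 ≠ c) :
    muF m c c = ⊥ := by
  have h1 : c ⊔ c = c := sup_idem c
  have h2 : c ⊓ m 0 = ⊥ := flat_inf_eq_bot hflat hct (hm 0).2 (Ne.symm hm0c)
  have h3 : m 1 ⊓ c = ⊥ := flat_inf_eq_bot hflat (hm 1).2 hct hm1c
  rw [muF, h1, h2, bot_sup_eq, h3]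
  exact betaF_bot hbt hflat hm hmI

theorem muF_bot {c : L} : muF m c ⊥ = ⊥ := by
  rw [muF, inf_bot_eq]
  exact betaF_bot hbt hflat hm hmI

theorem kappaF_of_top {Cm : Finset L} (hCm : ∀ c ∈ Cm, c ≠ ⊥ ∧ c ≠ ⊤) :
    kappaF m Cm (⊤ : L) = ⊤ := by
  rw [kappaF, betaF_ne hbt hflat hm hmI (Ne.symm hbt), top_inf_eq]
  apply top_unique
  apply Finset.le_inf
  intro c hc
  rw [muF_ne hbt hflat hm hmI (Ne.symm hbt) (fun e => (hCm c hc).2 e.symm) (hCm c hc).1]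

theorem kappaF_of_fresh {Cm : Finset L} {y : L} (hCm : ∀ c ∈ Cm, c ≠ ⊥ ∧ c ≠ ⊤)
    (hyb : y ≠ ⊥) (hyC : ∀ c ∈ Cm, y ≠ c) : kappaF m Cm y = ⊤ := by
  rw [kappaF, betaF_ne hbt hflat hm hmI hyb, top_inf_eq]
  apply top_unique
  apply Finset.le_inf
  intro c hc
  rw [muF_ne hbt hflat hm hmI hyb (hyC c hc) (hCm c hc).1]

theorem kappaF_bot {Cm : Finset L} : kappaF m Cm (⊥ : L) = ⊥ := by
  rw [kappaF, betaF_bot hbt hflat hm hmI, bot_inf_eq]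

theorem kappaF_of_memC {Cm : Finset L} {y : L} (hy : y ∈ Cm) (hyb : y ≠ ⊥) (hyt : y ≠ ⊤)
    (hm0c : m 0 ≠ y) (hm1c : m 1 ≠ y) : kappaF m Cm y = ⊥ := by
  apply le_bot_iff.mp
  calc kappaF m Cm y ≤ Cm.inf fun c => muF m c y := inf_le_right
    _ ≤ muF m y y := Finset.inf_le hy
    _ = ⊥ := muF_self hbt hflat hm hmI hyb hyt hm0c hm1c

end Gadgets

section Poly

variable {L : Type u} [Lattice L] [BoundedOrder L] {n : ℕ}

theorem isLP_finset_sup {ι : Type v} (s : Finset ι) (g : ι → (Fin n → L) → L)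
    (h : ∀ i ∈ s, IsLatticePolynomial (g i)) :
    IsLatticePolynomial fun x => s.sup fun i => g i x := by
  classical
  induction s using Finset.induction_on with
  | empty => simpa using IsLatticePolynomial.const (⊥ : L)
  | @insert a s hna ih =>
    have he : (fun x => (insert a s).sup fun i => g i x)
        = fun x => g a x ⊔ s.sup fun i => g i x := by
      funext x; simp [Finset.sup_insert]
    rw [he]
    exact .sup (h a (by simp)) (ih fun i hi => h i (by simp [hi]))

theorem isLP_finset_inf {ι : Type v} (s : Finset ι) (g : ι → (Fin n → L) → L)
    (h : ∀ i ∈ s, IsLatticePolynomial (g i)) :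
    IsLatticePolynomial fun x => s.inf fun i => g i x := by
  classical
  induction s using Finset.induction_on with
  | empty => simpa using IsLatticePolynomial.const (⊤ : L)
  | @insert a s hna ih =>
    have he : (fun x => (insert a s).inf fun i => g i x)
        = fun x => g a x ⊓ s.inf fun i => g i x := by
      funext x; simp [Finset.inf_insert]
    rw [he]
    exact .inf (h a (by simp)) (ih fun i hi => h i (by simp [hi]))

variable {m : Fin 4 → L}

theorem isLP_tau_comp {g : (Fin n → L) → L} (hg : IsLatticePolynomial g) :
    IsLatticePolynomial fun x => tauF m (g x) :=
  .inf (.sup (.inf hg (.const _)) (.inf hg (.const _)))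
    (.sup (.inf hg (.const _)) (.inf hg (.const _)))

theorem isLP_beta_comp {g : (Fin n → L) → L} (hg : IsLatticePolynomial g) :
    IsLatticePolynomial fun x => betaF m (g x) :=
  .sup (.inf (.sup hg (.const _)) (.sup hg (.const _)))
    (.inf (.sup hg (.const _)) (.sup hg (.const _)))

theorem isLP_chi_comp {c : L} {g : (Fin n → L) → L} (hg : IsLatticePolynomial g) :
    IsLatticePolynomial fun x => chiF m c (g x) :=
  .inf (.sup (.inf hg (.const _)) (.const _)) (.sup (.inf hg (.const _)) (.const _))

theorem isLP_mu_comp {c : L} {g : (Fin n → L) → L} (hg : IsLatticePolynomial g) :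
    IsLatticePolynomial fun x => muF m c (g x) :=
  isLP_beta_comp (.inf (.sup (.inf (.sup hg (.const _)) (.const _)) (.const _)) hg)

theorem isLP_kappa_comp {Cm : Finset L} {g : (Fin n → L) → L} (hg : IsLatticePolynomial g) :
    IsLatticePolynomial fun x => kappaF m Cm (g x) :=
  .inf (isLP_beta_comp hg) (isLP_finset_inf Cm _ fun c _ => isLP_mu_comp hg)

end Poly

section Comps

variable {L : Type u} [Lattice L] [BoundedOrder L]

open Classical in
noncomputable def dcompF (m : Fin 4 → L) (Cm : Finset L) (C : Set L) (a y : L) : L :=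
  if a = ⊥ then ⊤ else if a = ⊤ then tauF m y else if a ∈ C then chiF m a y
  else kappaF m Cm y

open Classical in
noncomputable def ecompF (m : Fin 4 → L) (D : Set L) (a b y z : L) : L :=
  if a ∈ D ∨ b ∈ D then ⊤ else if a = b then betaF m (y ⊓ z) else tauF m (y ⊔ z)

open Classical in
noncomputable def VF {n : ℕ} (D : Set L) (f : (Fin n → L) → L) (w x : Fin n → L) : L :=
  if f w ∈ D then f w else Finset.univ.inf fun i => if w i = f w then x i else ⊤

noncomputable def deltaF {n : ℕ} (m : Fin 4 → L) (Cm : Finset L) (C D : Set L)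
    (w x : Fin n → L) : L :=
  (Finset.univ.inf fun i => dcompF m Cm C (w i) (x i)) ⊓
    (Finset.univ.inf fun p : Fin n × Fin n => ecompF m D (w p.1) (w p.2) (x p.1) (x p.2))

noncomputable def chiWF {n : ℕ} (m : Fin 4 → L) (Cm : Finset L) (C D : Set L)
    (f : (Fin n → L) → L) (w x : Fin n → L) : L :=
  VF D f w x ⊓ deltaF m Cm C D w x

variable {n : ℕ}

theorem isLP_dcomp {m : Fin 4 → L} {Cm : Finset L} {C : Set L} (a : L) (i : Fin n) :
    IsLatticePolynomial fun x : Fin n → L => dcompF m Cm C a (x i) := by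
  unfold dcompF
  split_ifs
  · exact .const _
  · exact isLP_tau_comp (.proj i)
  · exact isLP_chi_comp (.proj i)
  · exact isLP_kappa_comp (.proj i)

theorem isLP_ecomp {m : Fin 4 → L} {D : Set L} (a b : L) (i i' : Fin n) :
    IsLatticePolynomial fun x : Fin n → L => ecompF m D a b (x i) (x i') := by
  unfold ecompF
  split_ifs
  · exact .const _
  · exact isLP_beta_comp (.inf (.proj i) (.proj i'))
  · exact isLP_tau_comp (.sup (.proj i) (.proj i'))

theorem isLP_V {D : Set L} {f : (Fin n → L) → L} (w : Fin n → L) :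
    IsLatticePolynomial fun x => VF D f w x := by
  unfold VF
  split_ifs
  · exact .const _
  · refine isLP_finset_inf _ _ fun i _ => ?_
    split_ifs
    · exact .proj i
    · exact .const _

theorem isLP_chiW {m : Fin 4 → L} {Cm : Finset L} {C D : Set L} {f : (Fin n → L) → L}
    (w : Fin n → L) : IsLatticePolynomial fun x => chiWF m Cm C D f w x := by
  refine .inf (isLP_V w) (.inf ?_ ?_)
  · exact isLP_finset_inf _ _ fun i _ => isLP_dcomp (w i) i
  · exact isLP_finset_inf _ _ fun p _ => isLP_ecomp (w p.1) (w p.2) p.1 p.2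

theorem finset_inf_botTop {ι : Type v} (hbt : (⊥ : L) ≠ ⊤) (s : Finset ι) (g : ι → L)
    (h : ∀ i ∈ s, g i = ⊤ ∨ g i = ⊥) : s.inf g = ⊤ ∨ s.inf g = ⊥ := by
  classical
  induction s using Finset.induction_on with
  | empty => left; simp
  | @insert a s hna ih =>
    rw [Finset.inf_insert]
    rcases h a (by simp) with ha | ha
    · rcases ih (fun i hi => h i (by simp [hi])) with hs | hs
      · left; rw [ha, hs, top_inf_eq]
      · right; rw [hs, inf_bot_eq]
    · right; rw [ha, bot_inf_eq]

variable (hbt : (⊥ : L) ≠ ⊤)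
  (hflat : ∀ a b : L, a ≤ b → a = ⊥ ∨ b = ⊤ ∨ a = b)
  {m : Fin 4 → L} (hm : ∀ j, m j ≠ ⊥ ∧ m j ≠ ⊤) (hmI : Function.Injective m)
  {C : Set L} {Cm : Finset L}
  (hCm : ∀ c ∈ Cm, c ∈ C ∧ c ≠ ⊥ ∧ c ≠ ⊤)
  (hCm' : ∀ c ∈ C, c ≠ ⊥ → c ≠ ⊤ → c ∈ Cm)
  (hmC : ∀ j, m j ∉ C)

include hbt hflat hm hmI hCm hCm' hmC

theorem dcompF_cases (a y : L) : dcompF m Cm C a y = ⊤ ∨ dcompF m Cm C a y = ⊥ := by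
  rw [dcompF]
  split_ifs with h1 h2 h3
  · left; rfl
  · by_cases hy : y = ⊤
    · left; rw [hy, tauF_top hbt hflat hm hmI]
    · right; exact tauF_ne hbt hflat hm hmI hy
  · by_cases hy : y = a ∨ y = ⊤
    · left
      exact chiF_mem hbt hflat hm hmI h1 (fun e => hmC 0 (e ▸ h3)) (fun e => hmC 1 (e ▸ h3)) hy
    · push_neg at hy
      right; exact chiF_not hbt hflat hm hmI h2 hy.1 hy.2
  · by_cases hyt : y = ⊤
    · left; rw [hyt]; exact kappaF_of_top hbt hflat hm hmI (fun c hc => (hCm c hc).2)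
    · by_cases hyb : y = ⊥
      · right; rw [hyb]; exact kappaF_bot hbt hflat hm hmI
      · by_cases hyC : y ∈ Cm
        · right
          exact kappaF_of_memC hbt hflat hm hmI hyC hyb hyt
            (fun e => hmC 0 (e ▸ (hCm y hyC).1)) (fun e => hmC 1 (e ▸ (hCm y hyC).1))
        · left
          exact kappaF_of_fresh hbt hflat hm hmI (fun c hc => (hCm c hc).2) hyb
            (fun c hc e => hyC (e ▸ hc))

omit hCm hCm' hmC in
theorem ecompF_cases {D : Set L} (a b y z : L) :
    ecompF m D a b y z = ⊤ ∨ ecompF m D a b y z = ⊥ := by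
  rw [ecompF]
  split_ifs
  · left; rfl
  · by_cases h : y ⊓ z = ⊥
    · right; rw [h]; exact betaF_bot hbt hflat hm hmI
    · left; exact betaF_ne hbt hflat hm hmI h
  · by_cases h : y ⊔ z = ⊤
    · left; rw [h]; exact tauF_top hbt hflat hm hmI
    · right; exact tauF_ne hbt hflat hm hmI h

theorem deltaF_cases {D : Set L} (w x : Fin n → L) :
    deltaF m Cm C D w x = ⊤ ∨ deltaF m Cm C D w x = ⊥ := by
  rw [deltaF]
  have h1 := finset_inf_botTop hbt Finset.univ (fun i => dcompF m Cm C (w i) (x i))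
    (fun i _ => dcompF_cases hbt hflat hm hmI hCm hCm' hmC (w i) (x i))
  have h2 := finset_inf_botTop hbt Finset.univ
    (fun p : Fin n × Fin n => ecompF m D (w p.1) (w p.2) (x p.1) (x p.2))
    (fun p _ => ecompF_cases hbt hflat hm hmI (w p.1) (w p.2) (x p.1) (x p.2))
  rcases h1 with h1 | h1
  · rcases h2 with h2 | h2
    · left; rw [h1, h2, top_inf_eq]
    · right; rw [h2, inf_bot_eq]
  · right; rw [h1, bot_inf_eq]

end Comps

section Main

variable {L : Type u} [Lattice L] [BoundedOrder L] [Infinite L] {n : ℕ}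

theorem fact1 (f : (Fin n → L) → L) (D : Set L) (hD : D.Finite)
    (hsymD : ∀ π : L ≃ L, (∀ d ∈ D, π d = d) → ∀ x, f (fun i => π (x i)) = π (f x))
    (x : Fin n → L) : f x ∈ Set.range x ∪ D := by
  classical
  by_contra h
  have hfr : f x ∉ Set.range x := fun hh => h (Or.inl hh)
  have hfD : f x ∉ D := fun hh => h (Or.inr hh)
  have hS : (D ∪ Set.range x ∪ {f x}).Finite :=
    (hD.union (Set.finite_range x)).union (Set.finite_singleton _)
  obtain ⟨v, hv⟩ := hS.infinite_compl.nonempty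
  simp only [Set.mem_compl_iff, Set.mem_union, Set.mem_singleton_iff, not_or] at hv
  obtain ⟨⟨hvD, hvr⟩, hvf⟩ := hv
  have hfix : ∀ d ∈ D, Equiv.swap (f x) v d = d := fun d hd =>
    Equiv.swap_apply_of_ne_of_ne (fun e => hfD (by rw [← e]; exact hd))
      (fun e => hvD (by rw [← e]; exact hd))
  have hx : (fun i => Equiv.swap (f x) v (x i)) = x := funext fun i =>
    Equiv.swap_apply_of_ne_of_ne (fun e => hfr ⟨i, e⟩) (fun e => hvr ⟨i, e⟩)
  have hkey := hsymD (Equiv.swap (f x) v) hfix x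
  rw [hx, Equiv.swap_apply_left] at hkey
  exact hvf hkey.symm

variable (hbt : (⊥ : L) ≠ ⊤)
  (hflat : ∀ a b : L, a ≤ b → a = ⊥ ∨ b = ⊤ ∨ a = b)
  (f : (Fin n → L) → L) (hf : Monotone f)
  {C D : Set L} (hDdef : D = C ∪ {⊥, ⊤}) (hD : D.Finite)
  (hsymD : ∀ π : L ≃ L, (∀ d ∈ D, π d = d) → ∀ x, f (fun i => π (x i)) = π (f x))
  {m : Fin 4 → L} (hm : ∀ j, m j ≠ ⊥ ∧ m j ≠ ⊤) (hmI : Function.Injective m)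
  (hmD : ∀ j, m j ∉ D)
  {Cm : Finset L}
  (hCm : ∀ c ∈ Cm, c ∈ C ∧ c ≠ ⊥ ∧ c ≠ ⊤)
  (hCm' : ∀ c ∈ C, c ≠ ⊥ → c ≠ ⊤ → c ∈ Cm)

include hbt hflat hf hDdef hD hsymD hm hmI hmD hCm hCm'

omit hf hCm' in
theorem le_core (u : Fin n → L) (huI : Function.Injective u) (huD : ∀ j, u j ∉ D)
    (x : Fin n → L) :
    ∃ w : Fin n → L, (∀ i, w i ∈ D ∨ ∃ j, w i = u j) ∧
      f x ≤ chiWF m Cm C D f w x := by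
  classical
  have hbotD : (⊥ : L) ∈ D := by rw [hDdef]; exact Or.inr (Or.inl rfl)
  have htopD : (⊤ : L) ∈ D := by rw [hDdef]; exact Or.inr (Or.inr rfl)
  have hmemD : ∀ z : L, z ∈ D ↔ z ∈ C ∨ z = ⊥ ∨ z = ⊤ := by
    intro z
    rw [hDdef]
    simp only [Set.mem_union, Set.mem_insert_iff, Set.mem_singleton_iff]
  set A : Finset L := (Finset.image x Finset.univ) \ hD.toFinset with hA
  have hkn : A.card ≤ n := by
    calc A.card ≤ (Finset.image x Finset.univ).card := Finset.card_le_card Finset.sdiff_subset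
      _ ≤ Finset.univ.card := Finset.card_image_le
      _ = n := by simp
  set a : Fin A.card → L := fun j => ((A.equivFin.symm j) : L) with ha
  have ha_inj : Function.Injective a := fun j1 j2 h => A.equivFin.symm.injective (Subtype.ext h)
  have haA : ∀ j, a j ∈ A := fun j => (A.equivFin.symm j).2
  have ha_surj : ∀ v ∈ A, ∃ j, a j = v := fun v hv =>
    ⟨A.equivFin ⟨v, hv⟩, by rw [ha]; simp⟩
  have haD : ∀ j, a j ∉ D := by
    intro j
    have h := haA j
    rw [hA, Finset.mem_sdiff] at h
    simpa [Set.Finite.mem_toFinset] using h.2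
  set b : Fin A.card → L := fun j => u (Fin.castLE hkn j) with hb
  have hb_inj : Function.Injective b := fun j1 j2 h =>
    Fin.castLE_injective hkn (huI h)
  have hbD : ∀ j, b j ∉ D := fun j => huD _
  obtain ⟨π, hπD, hπab⟩ := exists_perm D hD a b ha_inj hb_inj haD hbD
  set w : Fin n → L := fun i => π (x i) with hw
  have hagree : ∀ i, ∀ d ∈ D, (w i = d ↔ x i = d) := by
    intro i d hd
    constructor
    · intro h
      have h2 : π (x i) = π d := by rw [hπD d hd]; exact h
      exact π.injective h2
    · intro h
      rw [hw]; simp only; rw [h]; exact hπD d hd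
  have hxiD : ∀ i, x i ∉ D → w i ∉ D := fun i hx => perm_not_mem hπD hx
  have hDxi : ∀ i, x i ∈ D → w i = x i := fun i h => (hagree i (x i) h).mpr rfl
  have hmem : ∀ i, w i ∈ D ∨ ∃ j, w i = u j := by
    intro i
    by_cases hxi : x i ∈ D
    · rw [hDxi i hxi]
      exact Or.inl hxi
    · have hxiA : x i ∈ A := Finset.mem_sdiff.mpr
        ⟨Finset.mem_image.mpr ⟨i, Finset.mem_univ i, rfl⟩,
         by simpa [Set.Finite.mem_toFinset] using hxi⟩
      obtain ⟨j, hj⟩ := ha_surj _ hxiA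
      have hwb : w i = b j := by rw [hw]; simp only; rw [← hj]; exact hπab j
      exact Or.inr ⟨_, hwb⟩
  have hdelta : deltaF m Cm C D w x = ⊤ := by
    apply top_unique
    rw [deltaF]
    apply le_inf
    · apply Finset.le_inf
      intro i _
      suffices h : dcompF m Cm C (w i) (x i) = ⊤ by rw [h]
      by_cases h1 : w i = ⊥
      · rw [dcompF, if_pos h1]
      · by_cases h2 : w i = ⊤
        · rw [dcompF, if_neg h1, if_pos h2, (hagree i ⊤ htopD).mp h2,
            tauF_top hbt hflat hm hmI]
        · by_cases h3 : w i ∈ C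
          · have hwD : w i ∈ D := by rw [hmemD]; exact Or.inl h3
            have hxw : x i = w i := (hagree i (w i) hwD).mp rfl
            rw [dcompF, if_neg h1, if_neg h2, if_pos h3]
            exact chiF_mem hbt hflat hm hmI h1 (fun e => hmD 0 (e ▸ hwD))
              (fun e => hmD 1 (e ▸ hwD)) (Or.inl hxw)
          · rw [dcompF, if_neg h1, if_neg h2, if_neg h3]
            have hwD : w i ∉ D := by rw [hmemD]; push_neg; exact ⟨h3, h1, h2⟩
            have hxD : x i ∉ D := fun h => hwD (hDxi i h ▸ h)
            exact kappaF_of_fresh hbt hflat hm hmI (fun c hc => (hCm c hc).2)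
              (fun e => hxD (by rw [e]; exact hbotD))
              (fun c hc e => hxD (by rw [e, hmemD]; exact Or.inl (hCm c hc).1))
    · apply Finset.le_inf
      intro p _
      suffices h : ecompF m D (w p.1) (w p.2) (x p.1) (x p.2) = ⊤ by rw [h]
      by_cases hg : w p.1 ∈ D ∨ w p.2 ∈ D
      · rw [ecompF, if_pos hg]
      · push_neg at hg
        have hx1 : x p.1 ∉ D := fun h => hg.1 (hDxi _ h ▸ h)
        have hx2 : x p.2 ∉ D := fun h => hg.2 (hDxi _ h ▸ h)
        by_cases he : w p.1 = w p.2
        · have he' : π (x p.1) = π (x p.2) := by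
            have := he; rw [hw] at this; simpa using this
          have hxe : x p.1 = x p.2 := π.injective he'
          rw [ecompF, if_neg (not_or.mpr ⟨hg.1, hg.2⟩), if_pos he, ← hxe, inf_idem]
          exact betaF_ne hbt hflat hm hmI (fun e => hx1 (by rw [e]; exact hbotD))
        · have hxe : x p.1 ≠ x p.2 := by
            intro e
            apply he
            rw [hw]; simp only; rw [e]
          rw [ecompF, if_neg (not_or.mpr ⟨hg.1, hg.2⟩), if_neg he,
            flat_sup_eq_top hflat (fun e => hx1 (by rw [e]; exact hbotD)) (fun e => hx2 (by rw [e]; exact hbotD)) hxe,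
            tauF_top hbt hflat hm hmI]
  have hfw : f w = π (f x) := by rw [hw]; exact hsymD π hπD x
  have hV : VF D f w x = f x := by
    by_cases hfxD : f x ∈ D
    · have hfwx : f w = f x := by rw [hfw, hπD _ hfxD]
      rw [VF, if_pos (hfwx ▸ hfxD)]
      exact hfwx
    · have hfwD : f w ∉ D := by rw [hfw]; exact perm_not_mem hπD hfxD
      rcases fact1 f D hD hsymD x with hr | hDm
      · obtain ⟨i₀, hi₀⟩ := hr
        rw [VF, if_neg hfwD]
        have hwi₀ : w i₀ = f w := by rw [hw]; simp only; rw [hi₀, hfw]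
        apply le_antisymm
        · calc (Finset.univ.inf fun i => if w i = f w then x i else ⊤)
              ≤ (if w i₀ = f w then x i₀ else ⊤) := Finset.inf_le (Finset.mem_univ i₀)
            _ = x i₀ := if_pos hwi₀
            _ = f x := hi₀
        · apply Finset.le_inf
          intro i _
          by_cases h : w i = f w
          · rw [if_pos h]
            have h2 : π (x i) = π (f x) := by
              rw [← hfw]
              have := h; rw [hw] at this; simpa using this
            exact le_of_eq (π.injective h2).symm
          · rw [if_neg h]; exact le_top
      · exact absurd hDm hfxD
  refine ⟨w, hmem, ?_⟩
  rw [chiWF, hV, hdelta, inf_top_eq]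

theorem ge_core (w x : Fin n → L) : chiWF m Cm C D f w x ≤ f x := by
  classical
  have hbotD : (⊥ : L) ∈ D := by rw [hDdef]; exact Or.inr (Or.inl rfl)
  have htopD : (⊤ : L) ∈ D := by rw [hDdef]; exact Or.inr (Or.inr rfl)
  have hmemD : ∀ z : L, z ∈ D ↔ z ∈ C ∨ z = ⊥ ∨ z = ⊤ := by
    intro z
    rw [hDdef]
    simp only [Set.mem_union, Set.mem_insert_iff, Set.mem_singleton_iff]
  have hmC : ∀ j, m j ∉ C := fun j h => hmD j ((hmemD _).mpr (Or.inl h))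
  rcases deltaF_cases hbt hflat hm hmI hCm hCm' hmC (D := D) w x with hδ | hδ
  case inr =>
    calc chiWF m Cm C D f w x ≤ deltaF m Cm C D w x := inf_le_right
      _ = ⊥ := hδ
      _ ≤ f x := bot_le
  case inl =>
  rw [deltaF] at hδ
  have hδ1 : (Finset.univ.inf fun i => dcompF m Cm C (w i) (x i)) = ⊤ :=
    top_unique (le_trans (le_of_eq hδ.symm) inf_le_left)
  have hδ2 : (Finset.univ.inf fun p : Fin n × Fin n =>
      ecompF m D (w p.1) (w p.2) (x p.1) (x p.2)) = ⊤ :=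
    top_unique (le_trans (le_of_eq hδ.symm) inf_le_right)
  have hd1 : ∀ i, dcompF m Cm C (w i) (x i) = ⊤ := fun i =>
    top_unique (le_trans (le_of_eq hδ1.symm) (Finset.inf_le (Finset.mem_univ i)))
  have hd2 : ∀ p : Fin n × Fin n, ecompF m D (w p.1) (w p.2) (x p.1) (x p.2) = ⊤ := fun p =>
    top_unique (le_trans (le_of_eq hδ2.symm) (Finset.inf_le (Finset.mem_univ p)))
  -- semantic consequences
  have Htop : ∀ i, w i = ⊤ → x i = ⊤ := by
    intro i h
    have hc := hd1 i
    rw [dcompF, if_neg (fun e => hbt (by rw [e] at h; exact h)), if_pos h] at hc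
    by_contra hne
    rw [tauF_ne hbt hflat hm hmI hne] at hc
    exact hbt hc
  have HC : ∀ i, w i ≠ ⊥ → w i ≠ ⊤ → w i ∈ C → x i = w i ∨ x i = ⊤ := by
    intro i h1 h2 h3
    by_contra hne
    push_neg at hne
    have hc := hd1 i
    rw [dcompF, if_neg h1, if_neg h2, if_pos h3,
      chiF_not hbt hflat hm hmI h2 hne.1 hne.2] at hc
    exact hbt hc
  have HK : ∀ i, w i ∉ D → (x i = ⊤ ∨ x i ∉ D) := by
    intro i hiD
    have h1 : w i ≠ ⊥ := fun e => hiD (by rw [e]; exact hbotD)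
    have h2 : w i ≠ ⊤ := fun e => hiD (by rw [e]; exact htopD)
    have h3 : w i ∉ C := fun e => hiD ((hmemD _).mpr (Or.inl e))
    have hc := hd1 i
    rw [dcompF, if_neg h1, if_neg h2, if_neg h3] at hc
    by_cases hxt : x i = ⊤
    · exact Or.inl hxt
    right
    intro hxD
    have hkb : kappaF m Cm (x i) = ⊥ := by
      by_cases hxb : x i = ⊥
      · rw [hxb]; exact kappaF_bot hbt hflat hm hmI
      · have hxC : x i ∈ C := by
          rcases (hmemD _).mp hxD with h | h | h
          · exact h
          · exact absurd h hxb
          · exact absurd h hxt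
        exact kappaF_of_memC hbt hflat hm hmI (hCm' _ hxC hxb hxt) hxb hxt
          (fun e => hmC 0 (by rw [e]; exact hxC)) (fun e => hmC 1 (by rw [e]; exact hxC))
    rw [hkb] at hc
    exact hbt hc
  have Hbeta : ∀ i i', w i ∉ D → w i = w i' → x i ⊓ x i' ≠ ⊥ := by
    intro i i' hiD he hbot
    have hc := hd2 (i, i')
    simp only at hc
    rw [ecompF, if_neg (not_or.mpr ⟨hiD, fun h => hiD (by rw [he]; exact h)⟩), if_pos he,
      hbot, betaF_bot hbt hflat hm hmI] at hc
    exact hbt hc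
  have Htau : ∀ i i', w i ∉ D → w i' ∉ D → w i ≠ w i' → x i ⊔ x i' = ⊤ := by
    intro i i' h1 h2 hne
    by_contra hst
    have hc := hd2 (i, i')
    simp only at hc
    rw [ecompF, if_neg (not_or.mpr ⟨h1, h2⟩), if_neg hne,
      tauF_ne hbt hflat hm hmI hst] at hc
    exact hbt hc
  -- enumeration of the fresh values of w
  set A : Finset L := (Finset.image w Finset.univ) \ hD.toFinset with hA
  set a : Fin A.card → L := fun j => ((A.equivFin.symm j) : L) with ha
  have ha_inj : Function.Injective a := fun j1 j2 h => A.equivFin.symm.injective (Subtype.ext h)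
  have haA : ∀ j, a j ∈ A := fun j => (A.equivFin.symm j).2
  have ha_surj : ∀ v ∈ A, ∃ j, a j = v := fun v hv =>
    ⟨A.equivFin ⟨v, hv⟩, by rw [ha]; simp⟩
  have haD : ∀ j, a j ∉ D := by
    intro j
    have h := haA j
    rw [hA, Finset.mem_sdiff] at h
    simpa [Set.Finite.mem_toFinset] using h.2
  -- the key permutation argument, for an arbitrary admissible padding r
  have key : ∀ r : Fin A.card → L, Function.Injective r → (∀ j, r j ∉ D) →
      (∀ j, r j ∉ Set.range x) →
      (f w ∈ D → f w ≤ f x) ∧ (∀ j, f w = a j →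
        (if h : ∃ i, w i = a j ∧ x i ≠ ⊤ then x h.choose else r j) ≤ f x) := by
    intro r hrI hrD hrX
    set s : Fin A.card → L :=
      fun j => if h : ∃ i, w i = a j ∧ x i ≠ ⊤ then x h.choose else r j with hs
    have hsD : ∀ j, s j ∉ D := by
      intro j
      rw [hs]; simp only
      split_ifs with h
      · have hspec := h.choose_spec
        have hwD : w h.choose ∉ D := by rw [hspec.1]; exact haD j
        rcases HK h.choose hwD with ht | hD'
        · exact absurd ht hspec.2
        · exact hD'
      · exact hrD j
    have hsI : Function.Injective s := by
      intro j j' he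
      by_contra hne
      rw [hs] at he; simp only at he
      by_cases hj : ∃ i, w i = a j ∧ x i ≠ ⊤ <;>
        by_cases hj' : ∃ i, w i = a j' ∧ x i ≠ ⊤
      · rw [dif_pos hj, dif_pos hj'] at he
        have sp := hj.choose_spec
        have sp' := hj'.choose_spec
        have hwne : w hj.choose ≠ w hj'.choose := by
          rw [sp.1, sp'.1]
          exact fun e => hne (ha_inj e)
        have htt := Htau hj.choose hj'.choose (by rw [sp.1]; exact haD j)
          (by rw [sp'.1]; exact haD j') hwne
        rw [he, sup_idem] at htt
        exact sp'.2 htt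
      · rw [dif_pos hj, dif_neg hj'] at he
        exact hrX j' ⟨hj.choose, he⟩
      · rw [dif_neg hj, dif_pos hj'] at he
        exact hrX j ⟨hj'.choose, he.symm⟩
      · rw [dif_neg hj, dif_neg hj'] at he
        exact hne (hrI he)
    obtain ⟨π, hπD, hπas⟩ := exists_perm D hD a s ha_inj hsI haD hsD
    have hy_le : ∀ i, π (w i) ≤ x i := by
      intro i
      by_cases h1 : w i = ⊥
      · rw [h1, hπD ⊥ hbotD]; exact bot_le
      by_cases h2 : w i = ⊤
      · rw [h2, hπD ⊤ htopD, Htop i h2]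
      by_cases h3 : w i ∈ C
      · rw [hπD (w i) ((hmemD _).mpr (Or.inl h3))]
        rcases HC i h1 h2 h3 with h | h
        · exact le_of_eq h.symm
        · rw [h]; exact le_top
      · have hiD : w i ∉ D := by
          rw [hmemD]; push_neg; exact ⟨h3, h1, h2⟩
        have hiA : w i ∈ A := Finset.mem_sdiff.mpr
          ⟨Finset.mem_image.mpr ⟨i, Finset.mem_univ i, rfl⟩,
           by simpa [Set.Finite.mem_toFinset] using hiD⟩
        obtain ⟨j, hj⟩ := ha_surj _ hiA
        rw [← hj, hπas j]
        rw [hs]; simp only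
        split_ifs with h
        · have sp := h.choose_spec
          by_cases hxt : x i = ⊤
          · rw [hxt]; exact le_top
          · have hmeet := Hbeta h.choose i (by rw [sp.1]; exact haD j) (by rw [sp.1, hj])
            rcases hflat (x h.choose ⊓ x i) (x h.choose) inf_le_left with hh | hh | hh
            · exact absurd hh hmeet
            · exact absurd hh sp.2
            · calc x h.choose = x h.choose ⊓ x i := hh.symm
                _ ≤ x i := inf_le_right
        · have hxt : x i = ⊤ := by
            by_contra hxt
            exact h ⟨i, hj.symm, hxt⟩
          rw [hxt]; exact le_top
    have hyx : f (fun i => π (w i)) ≤ f x := hf fun i => hy_le i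
    have hyfw : f (fun i => π (w i)) = π (f w) := hsymD π hπD w
    constructor
    · intro hfwD
      calc f w = π (f w) := (hπD _ hfwD).symm
        _ = f (fun i => π (w i)) := hyfw.symm
        _ ≤ f x := hyx
    · intro j hj
      have : (if h : ∃ i, w i = a j ∧ x i ≠ ⊤ then x h.choose else r j) = s j := by
        rw [hs]
      rw [this]
      calc s j = π (a j) := (hπas j).symm
        _ = π (f w) := by rw [hj]
        _ = f (fun i => π (w i)) := hyfw.symm
        _ ≤ f x := hyx
  -- conclude
  have hVle : VF D f w x ≤ f x := by
    by_cases hfwD : f w ∈ D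
    · rw [VF, if_pos hfwD]
      obtain ⟨r, hrI, hrS⟩ := exists_fresh (D ∪ Set.range x)
        (hD.union (Set.finite_range x)) A.card
      exact (key r hrI (fun j h => hrS j (Or.inl h)) (fun j h => hrS j (Or.inr h))).1 hfwD
    · rw [VF, if_neg hfwD]
      rcases fact1 f D hD hsymD w with hrange | hmem2
      · obtain ⟨i₀, hi₀⟩ := hrange
        have hA₀ : f w ∈ A := Finset.mem_sdiff.mpr
          ⟨Finset.mem_image.mpr ⟨i₀, Finset.mem_univ i₀, hi₀⟩,
           by simpa [Set.Finite.mem_toFinset] using hfwD⟩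
        obtain ⟨j₀, hj₀⟩ := ha_surj _ hA₀
        by_cases hex : ∃ i, w i = a j₀ ∧ x i ≠ ⊤
        · obtain ⟨r, hrI, hrS⟩ := exists_fresh (D ∪ Set.range x)
            (hD.union (Set.finite_range x)) A.card
          have hle := (key r hrI (fun j h => hrS j (Or.inl h))
            (fun j h => hrS j (Or.inr h))).2 j₀ hj₀.symm
          rw [dif_pos hex] at hle
          have sp := hex.choose_spec
          calc (Finset.univ.inf fun i => if w i = f w then x i else ⊤)
              ≤ (if w hex.choose = f w then x hex.choose else ⊤) :=
                Finset.inf_le (Finset.mem_univ _)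
            _ = x hex.choose := if_pos (by rw [sp.1, hj₀])
            _ ≤ f x := hle
        · obtain ⟨r1, hr1I, hr1S⟩ := exists_fresh (D ∪ Set.range x)
            (hD.union (Set.finite_range x)) A.card
          obtain ⟨r2, hr2I, hr2S⟩ := exists_fresh ((D ∪ Set.range x) ∪ Set.range r1)
            ((hD.union (Set.finite_range x)).union (Set.finite_range r1)) A.card
          have h1 := (key r1 hr1I (fun j h => hr1S j (Or.inl h))
            (fun j h => hr1S j (Or.inr h))).2 j₀ hj₀.symm
          have h2 := (key r2 hr2I (fun j h => hr2S j (Or.inl (Or.inl h)))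
            (fun j h => hr2S j (Or.inl (Or.inr h)))).2 j₀ hj₀.symm
          rw [dif_neg hex] at h1 h2
          have hb1 : r1 j₀ ≠ ⊥ := fun e => hr1S j₀ (Or.inl (by rw [e]; exact hbotD))
          have hb2 : r2 j₀ ≠ ⊥ := fun e => hr2S j₀ (Or.inl (Or.inl (by rw [e]; exact hbotD)))
          have hne12 : r1 j₀ ≠ r2 j₀ := fun e => hr2S j₀ (Or.inr ⟨j₀, e⟩)
          have hfx : f x = ⊤ := flat_eq_top_of_two hflat hb1 hb2 hne12 h1 h2
          rw [hfx]
          exact le_top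
      · exact absurd hmem2 hfwD
  calc chiWF m Cm C D f w x ≤ VF D f w x := inf_le_left
    _ ≤ f x := hVle

end Main
end Stmt8Aux

/-- In an infinite flat bounded lattice, a monotone function `f : Lⁿ → L` that commutes
with every bijection of `L` fixing a fixed finite set `C ∪ {⊥, ⊤}` pointwise is a
polynomial function. -/
theorem stmt8 {L : Type u} [Lattice L] [BoundedOrder L] [Infinite L]
    (hbt : (⊥ : L) ≠ ⊤)
    (hflat : ∀ a b : L, a ≤ b → a = ⊥ ∨ b = ⊤ ∨ a = b)
    (n : ℕ) (f : (Fin n → L) → L) (hf : Monotone f)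
    (C : Set L) (hC : C.Finite)
    (hsym : ∀ π : L ≃ L, (∀ c ∈ C ∪ {⊥, ⊤}, π c = c) →
      ∀ x : Fin n → L, f (fun i => π (x i)) = π (f x)) :
    IsLatticePolynomial f := by
  classical
  set D : Set L := C ∪ {⊥, ⊤} with hDdef
  have hD : D.Finite := hC.union (by
    have : ({⊥, ⊤} : Set L).Finite := (Set.finite_singleton ⊤).insert ⊥
    exact this)
  have hsymD : ∀ π : L ≃ L, (∀ d ∈ D, π d = d) →
      ∀ x : Fin n → L, f (fun i => π (x i)) = π (f x) := hsym
  have hbotD : (⊥ : L) ∈ D := Or.inr (Or.inl rfl)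
  have htopD : (⊤ : L) ∈ D := Or.inr (Or.inr rfl)
  obtain ⟨e, heI, heD⟩ := Stmt8Aux.exists_fresh D hD (4 + n)
  set m : Fin 4 → L := fun j => e ⟨j.1, by omega⟩ with hmdef
  set u : Fin n → L := fun j => e ⟨4 + j.1, by omega⟩ with hudef
  have hmI : Function.Injective m := by
    intro j1 j2 h
    have h2 := heI h
    have h3 := congrArg Fin.val h2
    exact Fin.ext h3
  have huI : Function.Injective u := by
    intro j1 j2 h
    have h2 := heI h
    have h3 := congrArg Fin.val h2
    simp only at h3
    exact Fin.ext (by omega)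
  have hmD : ∀ j, m j ∉ D := fun j => heD _
  have huD : ∀ j, u j ∉ D := fun j => heD _
  have hm : ∀ j : Fin 4, m j ≠ ⊥ ∧ m j ≠ ⊤ := fun j =>
    ⟨fun h => hmD j (by rw [h]; exact hbotD), fun h => hmD j (by rw [h]; exact htopD)⟩
  set Cm : Finset L := hD.toFinset.filter (fun c => c ∈ C ∧ c ≠ ⊥ ∧ c ≠ ⊤) with hCmdef
  have hCm : ∀ c ∈ Cm, c ∈ C ∧ c ≠ ⊥ ∧ c ≠ ⊤ := fun c hc => (Finset.mem_filter.mp hc).2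
  have hCm' : ∀ c ∈ C, c ≠ ⊥ → c ≠ ⊤ → c ∈ Cm := fun c h h1 h2 =>
    Finset.mem_filter.mpr ⟨hD.mem_toFinset.mpr (Or.inl h), h, h1, h2⟩
  set DU : Finset L := hD.toFinset ∪ Finset.image u Finset.univ with hDU
  set W : Finset (Fin n → L) := Fintype.piFinset (fun _ => DU) with hW
  have hfeq : f = fun x => W.sup fun w => Stmt8Aux.chiWF m Cm C D f w x := by
    funext x
    apply le_antisymm
    · obtain ⟨w, hwmem, hwle⟩ := Stmt8Aux.le_core hbt hflat f hDdef hD hsymD hm hmI hmD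
        hCm u huI huD x
      have hwW : w ∈ W := by
        rw [hW]
        rw [Fintype.mem_piFinset]
        intro i
        rcases hwmem i with h | ⟨j, hj⟩
        · exact Finset.mem_union.mpr (Or.inl (hD.mem_toFinset.mpr h))
        · rw [hj]
          exact Finset.mem_union.mpr (Or.inr (Finset.mem_image.mpr ⟨j, Finset.mem_univ j, rfl⟩))
      exact le_trans hwle (Finset.le_sup (f := fun w => Stmt8Aux.chiWF m Cm C D f w x) hwW)
    · exact Finset.sup_le fun w _ =>
        Stmt8Aux.ge_core hbt hflat f hf hDdef hD hsymD hm hmI hmD hCm hCm' w x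
  rw [hfeq]
  exact Stmt8Aux.isLP_finset_sup W _ fun w _ => Stmt8Aux.isLP_chiW w
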